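/- Let U := {(x,y,z) ∈ ℝ³ : x ≠ 0}, φ := ½(x²+y²), ψ := z/x, and Z0' := xy ∂/∂x − x² ∂/∂y + yz ∂/∂z (a rescaling of ∇φ × ∇ψ on U), so that ∇_{Z0'}Z0'(φ) = −x²(x²+y²) ≠ 0 on U. Let g be any constant real symmetric invertible 3×3 matrix, and set Z1 := g⁻¹∇φ, Z2 := g⁻¹∇ψ, X := (∇_{Z0'}Z0'(ψ))·Z1 − (∇_{Z0'}Z0'(φ))·Z2, A := ½ g(Z0',Z0')/∇_{Z0'}Z0'(φ), u := (g₁₁g₂₂−g₁₂²)x² + 2(g₁₃g₂₂−g₁₂g₂₃)xz + (g₂₂g₃₃−g₂₃²)z², and v := g₁₂x + g₂₂y + g₂₃z. Then X(u) = 0 and X(v) = 0 on U, and the function V := u + v² satisfies X(V) = 0 and A·Z0'(Z1(V)) = Z0'(V) − Z0'(A)·Z1(V) on U. -/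

import Mathlib

noncomputable section

/-- Partial derivative `∂f/∂xⁱ` at `p`. -/
def pd (i : Fin 3) (f : (Fin 3 → ℝ) → ℝ) (p : Fin 3 → ℝ) : ℝ :=
  fderiv ℝ f p (Pi.single i 1)

/-- Gradient of a scalar function. -/
def grad (f : (Fin 3 → ℝ) → ℝ) (p : Fin 3 → ℝ) : Fin 3 → ℝ :=
  fun i => pd i f p

/-- Directional derivative `Σᵢ vⁱ ∂f/∂xⁱ` of `f` along the vector `v` at `p`. -/
def dd (v : Fin 3 → ℝ) (f : (Fin 3 → ℝ) → ℝ) (p : Fin 3 → ℝ) : ℝ :=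
  ∑ i, v i * pd i f p

/-- `(∇_W W)ⁱ = Σⱼ Wʲ ∂Wⁱ/∂xʲ`. -/
def nab (W : (Fin 3 → ℝ) → (Fin 3 → ℝ)) (p : Fin 3 → ℝ) : Fin 3 → ℝ :=
  fun i => ∑ j, W p j * pd j (fun q => W q i) p

/-- Euclidean cross product on `ℝ³`. -/
def cross (a b : Fin 3 → ℝ) : Fin 3 → ℝ :=
  ![a 1 * b 2 - a 2 * b 1, a 2 * b 0 - a 0 * b 2, a 0 * b 1 - a 1 * b 0]

/-- `g(v,w) = Σᵢⱼ gᵢⱼ vⁱ wʲ`. -/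
def gB (g : Matrix (Fin 3) (Fin 3) ℝ) (v w : Fin 3 → ℝ) : ℝ :=
  ∑ i, ∑ j, g i j * v i * w j

/-- Lie bracket of vector fields: `[V,W]ⁱ = Σⱼ (Vʲ ∂Wⁱ/∂xʲ − Wʲ ∂Vⁱ/∂xʲ)`. -/
def lieB (V W : (Fin 3 → ℝ) → (Fin 3 → ℝ)) (p : Fin 3 → ℝ) : Fin 3 → ℝ :=
  fun i => ∑ j, (V p j * pd j (fun q => W q i) p - W p j * pd j (fun q => V q i) p)

/-- curl of a vector field on `ℝ³`. -/
def curl (a : (Fin 3 → ℝ) → (Fin 3 → ℝ)) (p : Fin 3 → ℝ) : Fin 3 → ℝ :=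
  ![pd 1 (fun q => a q 2) p - pd 2 (fun q => a q 1) p,
    pd 2 (fun q => a q 0) p - pd 0 (fun q => a q 2) p,
    pd 0 (fun q => a q 1) p - pd 1 (fun q => a q 0) p]

/-- divergence of a vector field. -/
def divg (W : (Fin 3 → ℝ) → (Fin 3 → ℝ)) (p : Fin 3 → ℝ) : ℝ :=
  ∑ i, pd i (fun q => W q i) p

/-- Euclidean inner product on `ℝ³`. -/
def ip (a b : Fin 3 → ℝ) : ℝ := ∑ i, a i * b i

set_option linter.unusedVariables false

section pdTool

variable {f g : (Fin 3 → ℝ) → ℝ} {p : Fin 3 → ℝ} {i j : Fin 3}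

theorem pd_const (c : ℝ) : pd i (fun _ => c) p = 0 := by simp [pd]

theorem pd_coord : pd i (fun q => q j) p = if j = i then 1 else 0 := by
  have h : (fun q : Fin 3 → ℝ => q j)
      = (ContinuousLinearMap.proj j : (Fin 3 → ℝ) →L[ℝ] ℝ) := rfl
  rw [pd, h, ContinuousLinearMap.fderiv]
  simp [Pi.single_apply]

theorem pd_add (hf : DifferentiableAt ℝ f p) (hg : DifferentiableAt ℝ g p) :
    pd i (fun q => f q + g q) p = pd i f p + pd i g p := by
  simp [pd, fderiv_fun_add hf hg]

theorem pd_sub (hf : DifferentiableAt ℝ f p) (hg : DifferentiableAt ℝ g p) :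
    pd i (fun q => f q - g q) p = pd i f p - pd i g p := by
  simp [pd, fderiv_fun_sub hf hg]

theorem pd_neg : pd i (fun q => -f q) p = -pd i f p := by
  simp [pd, fderiv_neg]

theorem pd_mul (hf : DifferentiableAt ℝ f p) (hg : DifferentiableAt ℝ g p) :
    pd i (fun q => f q * g q) p = f p * pd i g p + g p * pd i f p := by
  simp [pd, fderiv_fun_mul hf hg]

theorem pd_inv (hg : DifferentiableAt ℝ g p) (hg0 : g p ≠ 0) :
    pd i (fun q => (g q)⁻¹) p = -(g p ^ 2)⁻¹ * pd i g p := by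
  have h : HasFDerivAt (fun q => (g q)⁻¹)
      ((ContinuousLinearMap.smulRight 1 (-(g p ^ 2)⁻¹)).comp (fderiv ℝ g p)) p :=
    (hasFDerivAt_inv hg0).comp p hg.hasFDerivAt
  rw [pd, h.fderiv]
  simp [pd, smul_eq_mul]
  ring

theorem pd_div (hf : DifferentiableAt ℝ f p) (hg : DifferentiableAt ℝ g p) (hg0 : g p ≠ 0) :
    pd i (fun q => f q / g q) p = (pd i f p * g p - f p * pd i g p) / g p ^ 2 := by
  have h : (fun q => f q / g q) = fun q => f q * (g q)⁻¹ := by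
    funext q; rw [div_eq_mul_inv]
  rw [h, pd_mul (g := fun q => (g q)⁻¹) hf (hg.inv hg0), pd_inv hg hg0]
  field_simp
  ring

end pdTool

set_option maxHeartbeats 4000000

/-- Example 5, general constant metric: for `φ = ½(x²+y²)`, `ψ = z/x`
on `{x ≠ 0}` and any constant symmetric invertible `g`: `X(u) = X(v) = 0`, and
`V = u + v²` satisfies `X(V) = 0` and the energy-free equation
`A·Z0'(Z1(V)) = Z0'(V) − Z0'(A)·Z1(V)`. -/
theorem example5_general_metric
    (g : Matrix (Fin 3) (Fin 3) ℝ) (hsym : g.IsSymm) (hinv : IsUnit g.det)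
    (U : Set (Fin 3 → ℝ)) (hU : U = {p | p 0 ≠ 0})
    (φ ψ : (Fin 3 → ℝ) → ℝ)
    (hφ : φ = fun p => 1/2 * (p 0 ^ 2 + p 1 ^ 2)) (hψ : ψ = fun p => p 2 / p 0)
    (Z0' : (Fin 3 → ℝ) → (Fin 3 → ℝ))
    (hZ0' : Z0' = fun p => ![p 0 * p 1, -(p 0 ^ 2), p 1 * p 2])
    (Z1 Z2 : (Fin 3 → ℝ) → (Fin 3 → ℝ))
    (hZ1 : Z1 = fun p => g⁻¹.mulVec (grad φ p))
    (hZ2 : Z2 = fun p => g⁻¹.mulVec (grad ψ p))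
    (X : (Fin 3 → ℝ) → (Fin 3 → ℝ))
    (hX : X = fun p => dd (nab Z0' p) ψ p • Z1 p - dd (nab Z0' p) φ p • Z2 p)
    (A : (Fin 3 → ℝ) → ℝ)
    (hA : A = fun p => 1/2 * gB g (Z0' p) (Z0' p) / dd (nab Z0' p) φ p)
    (u v : (Fin 3 → ℝ) → ℝ)
    (hu : u = fun p => (g 0 0 * g 1 1 - g 0 1 ^ 2) * p 0 ^ 2
                        + 2 * (g 0 2 * g 1 1 - g 0 1 * g 1 2) * p 0 * p 2
                        + (g 1 1 * g 2 2 - g 1 2 ^ 2) * p 2 ^ 2)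
    (hv : v = fun p => g 0 1 * p 0 + g 1 1 * p 1 + g 1 2 * p 2)
    (V : (Fin 3 → ℝ) → ℝ) (hV : V = fun p => u p + v p ^ 2) :
    ∀ p ∈ U,
      dd (nab Z0' p) φ p = -(p 0 ^ 2) * (p 0 ^ 2 + p 1 ^ 2) ∧
      dd (nab Z0' p) φ p ≠ 0 ∧
      dd (X p) u p = 0 ∧ dd (X p) v p = 0 ∧ dd (X p) V p = 0 ∧
      A p * dd (Z0' p) (fun q => dd (Z1 q) V q) p
          = dd (Z0' p) V p - dd (Z0' p) A p * dd (Z1 p) V p := by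
  have hdet0 : g.det ≠ 0 := hinv.ne_zero
  have h10 : g 1 0 = g 0 1 := hsym.apply 0 1
  have h20 : g 2 0 = g 0 2 := hsym.apply 0 2
  have h21 : g 2 1 = g 1 2 := hsym.apply 1 2
  have hdet3 : g.det = g 0 0 * (g 1 1 * g 2 2) - g 0 0 * (g 1 2 * g 1 2)
      - g 0 1 * (g 0 1 * g 2 2) + g 0 1 * (g 1 2 * g 0 2)
      + g 0 2 * (g 0 1 * g 1 2) - g 0 2 * (g 1 1 * g 0 2) := by
    rw [Matrix.det_fin_three, h10, h20, h21]; ring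
  have hgi : g⁻¹ = g.det⁻¹ •
      !![g 1 1 * g 2 2 - g 1 2 * g 1 2, -(g 0 1 * g 2 2) + g 0 2 * g 1 2,
           g 0 1 * g 1 2 - g 0 2 * g 1 1;
         -(g 0 1 * g 2 2) + g 1 2 * g 0 2, g 0 0 * g 2 2 - g 0 2 * g 0 2,
           -(g 0 0 * g 1 2) + g 0 2 * g 0 1;
         g 0 1 * g 1 2 - g 1 1 * g 0 2, -(g 0 0 * g 1 2) + g 0 1 * g 0 2,
           g 0 0 * g 1 1 - g 0 1 * g 0 1] := by
    rw [Matrix.inv_def, Ring.inverse_eq_inv, Matrix.adjugate_fin_three, h10, h20, h21]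
  subst hU hφ hψ hZ0' hZ1 hZ2 hX hA hu hv hV
  intro p hp
  simp only [Set.mem_setOf_eq] at hp
  have hD : ∀ q : Fin 3 → ℝ,
      dd (nab (fun r => ![r 0 * r 1, -(r 0 ^ 2), r 1 * r 2]) q)
        (fun r => 1/2 * (r 0 ^ 2 + r 1 ^ 2)) q
      = -(q 0 ^ 2) * (q 0 ^ 2 + q 1 ^ 2) := by
    intro q
    simp (disch := first | assumption | decide | fun_prop)
      [dd, nab, Fin.sum_univ_three, pow_two,
       pd_add, pd_sub, pd_mul, pd_neg, pd_const, pd_coord]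
    ring
  have hsq : (0:ℝ) < p 0 ^ 2 := by positivity
  have hDne : -(p 0 ^ 2) * (p 0 ^ 2 + p 1 ^ 2) ≠ 0 := by
    nlinarith [sq_nonneg (p 1)]
  have hDne' : -(p 0 * p 0) * (p 0 * p 0 + p 1 * p 1) ≠ 0 := by
    nlinarith [sq_nonneg (p 1)]
  have hE1 : -(2 * (p 0 * p 0 * (p 0 * p 0 + p 1 * p 1))) ≠ 0 := by
    nlinarith [sq_nonneg (p 1), sq_nonneg (p 0)]
  have hE2 : (2 : ℝ) * (p 0 * p 0 * (p 0 * p 0 + p 1 * p 1)) ≠ 0 := by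
    nlinarith [sq_nonneg (p 1), sq_nonneg (p 0)]
  have hE4 : -(p 0 * p 0 * (p 0 * p 0 + p 1 * p 1)) ≠ 0 := by
    nlinarith [sq_nonneg (p 1), sq_nonneg (p 0)]
  have hE3 : p 0 * p 0 * (p 0 * p 0 + p 1 * p 1) ≠ 0 := by
    nlinarith [sq_nonneg (p 1), sq_nonneg (p 0)]
  have hψ0 : dd (nab (fun r => ![r 0 * r 1, -(r 0 ^ 2), r 1 * r 2]) p)
      (fun r => r 2 / r 0) p = 0 := by
    simp (disch := first | assumption | decide | fun_prop)
      [dd, nab, Fin.sum_univ_three, pow_two,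
       pd_add, pd_sub, pd_mul, pd_neg, pd_const, pd_coord, pd_div]
    field_simp
    ring
  have hZ1V : ∀ q : Fin 3 → ℝ,
      dd (g⁻¹.mulVec (grad (fun r => 1/2 * (r 0 ^ 2 + r 1 ^ 2)) q))
        (fun r => (g 0 0 * g 1 1 - g 0 1 ^ 2) * r 0 ^ 2
            + 2 * (g 0 2 * g 1 1 - g 0 1 * g 1 2) * r 0 * r 2
            + (g 1 1 * g 2 2 - g 1 2 ^ 2) * r 2 ^ 2
            + (g 0 1 * r 0 + g 1 1 * r 1 + g 1 2 * r 2) ^ 2) q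
      = 2 * g 1 1 * (q 0 ^ 2 + q 1 ^ 2) := by
    intro q
    simp (disch := first | assumption | decide | fun_prop)
      [dd, grad, hgi, Matrix.mulVec, dotProduct, Fin.sum_univ_three,
       Matrix.smul_apply, smul_eq_mul, pow_two,
       pd_add, pd_sub, pd_mul, pd_neg, pd_const, pd_coord]
    field_simp
    simp only [hdet3]
    ring
  refine ⟨hD p, by rw [hD p]; exact hDne, ?_, ?_, ?_, ?_⟩
  · beta_reduce
    rw [hψ0, hD p]
    simp (disch := first | assumption | decide | fun_prop)
      [dd, grad, hgi, Matrix.mulVec, dotProduct, Fin.sum_univ_three,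
       Matrix.smul_apply, Pi.smul_apply, Pi.sub_apply, smul_eq_mul, pow_two,
       pd_add, pd_sub, pd_mul, pd_neg, pd_const, pd_coord, pd_div]
    field_simp
    ring
  · beta_reduce
    rw [hψ0, hD p]
    simp (disch := first | assumption | decide | fun_prop)
      [dd, grad, hgi, Matrix.mulVec, dotProduct, Fin.sum_univ_three,
       Matrix.smul_apply, Pi.smul_apply, Pi.sub_apply, smul_eq_mul, pow_two,
       pd_add, pd_sub, pd_mul, pd_neg, pd_const, pd_coord, pd_div]
    field_simp
    ring
  · beta_reduce
    rw [hψ0, hD p]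
    simp (disch := first | assumption | decide | fun_prop)
      [dd, grad, hgi, Matrix.mulVec, dotProduct, Fin.sum_univ_three,
       Matrix.smul_apply, Pi.smul_apply, Pi.sub_apply, smul_eq_mul, pow_two,
       pd_add, pd_sub, pd_mul, pd_neg, pd_const, pd_coord, pd_div]
    field_simp
    ring
  · beta_reduce
    simp only [hD, hZ1V]
    simp (disch := first | assumption | decide | fun_prop)
      [dd, gB, Fin.sum_univ_three, pow_two, h10, h20, h21,
       pd_add, pd_sub, pd_mul, pd_neg, pd_const, pd_coord, pd_div]
    field_simp
    ring
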